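/- With G_{m,n}(t) := e^{-mμt} - e^{-nμt}, the transient variance σ_m²(t) given in the previous closed form converges as t → ∞ to σ_m² = μ∞^{-1} π^T (Λ - ϱM) D (Λ - ϱM) 1, where ϱ = λ∞/μ∞. -/

import Mathlib

open Matrix Real Filter

lemma vecMul_smul_right {d : ℕ} (x : Fin d → ℝ) (c : ℝ) (A : Matrix (Fin d) (Fin d) ℝ) :
    x ᵥ* (c • A) = c • (x ᵥ* A) := by
  ext i
  simp only [Matrix.vecMul, dotProduct, Matrix.smul_apply, Pi.smul_apply, smul_eq_mul,
    Finset.mul_sum]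
  exact Finset.sum_congr rfl fun j _ => by ring

lemma exp_neg_tendsto (c : ℝ) (hc : 0 < c) :
    Tendsto (fun t : ℝ => Real.exp (-(c * t))) atTop (nhds 0) := by
  have h0 : Tendsto (fun t : ℝ => c * t) atTop atTop :=
    Tendsto.const_mul_atTop hc tendsto_id
  have h1 : Tendsto (fun t : ℝ => -(c * t)) atTop atBot :=
    tendsto_neg_atTop_atBot.comp h0
  exact Real.tendsto_exp_atBot.comp h1

/-- The transient variance `σ_m²(t)` converges, as `t → ∞`, to the stationary variance
`σ_m² = μ∞⁻¹ πᵀ (Λ - ϱM) D (Λ - ϱM) 1` with `ϱ = λ∞/μ∞`. -/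
theorem transient_variance_tendsto_stationary (d : ℕ)
    (pv lam mu : Fin d → ℝ) (hmu : ∀ i, 0 < mu i)
    (D : Matrix (Fin d) (Fin d) ℝ)
    (Lam Mm : Matrix (Fin d) (Fin d) ℝ)
    (hLam : Lam = Matrix.diagonal lam) (hMm : Mm = Matrix.diagonal mu)
    (laminf muinf : ℝ)
    (hlaminf : laminf = ∑ i, pv i * lam i) (hmuinf : muinf = ∑ i, pv i * mu i)
    (hmuinfpos : 0 < muinf)
    (ϱc : ℝ) (hϱc : ϱc = laminf / muinf)
    (ϱ : ℝ → ℝ) (hϱ : ∀ s, ϱ s = ϱc * (1 - Real.exp (-muinf * s)))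
    (σm2 : ℝ → ℝ)
    (hσ : ∀ t, σm2 t = 2 * Real.exp (-2 * muinf * t)
      * ∫ s in (0 : ℝ)..t, Real.exp (2 * muinf * s)
          * (pv ᵥ* ((Lam - ϱ s • Mm) * D * (Lam - ϱ s • Mm)) ⬝ᵥ (fun _ => (1 : ℝ)))) :
    Tendsto σm2 atTop (nhds
      (muinf⁻¹ * (pv ᵥ* ((Lam - ϱc • Mm) * D * (Lam - ϱc • Mm)) ⬝ᵥ (fun _ => (1 : ℝ))))) := by
  classical
  set A : ℝ := pv ᵥ* (Lam * D * Lam) ⬝ᵥ (fun _ => (1 : ℝ)) with hA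
  set B : ℝ := pv ᵥ* (Lam * D * Mm + Mm * D * Lam) ⬝ᵥ (fun _ => (1 : ℝ)) with hB
  set C : ℝ := pv ᵥ* (Mm * D * Mm) ⬝ᵥ (fun _ => (1 : ℝ)) with hC
  -- quadratic expansion of the bilinear form
  have key : ∀ r : ℝ, pv ᵥ* ((Lam - r • Mm) * D * (Lam - r • Mm)) ⬝ᵥ (fun _ => (1 : ℝ))
      = A - r * B + r ^ 2 * C := by
    intro r
    have hMat : (Lam - r • Mm) * D * (Lam - r • Mm)
        = Lam * D * Lam - r • (Lam * D * Mm + Mm * D * Lam) + (r ^ 2) • (Mm * D * Mm) := by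
      simp only [Matrix.sub_mul, Matrix.mul_sub, Matrix.smul_mul, Matrix.mul_smul, smul_smul,
        smul_sub, smul_add, pow_two]
      abel
    rw [hMat, Matrix.vecMul_add, Matrix.vecMul_sub, vecMul_smul_right, vecMul_smul_right,
      add_dotProduct, sub_dotProduct, smul_dotProduct,
      smul_dotProduct]
    simp only [smul_eq_mul, hA, hB, hC]
  -- coefficients of the integrand in powers of exp(-muinf s)
  set c0 : ℝ := A - ϱc * B + ϱc ^ 2 * C with hc0
  set c1 : ℝ := ϱc * B - 2 * ϱc ^ 2 * C with hc1
  set c2 : ℝ := ϱc ^ 2 * C with hc2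
  have integrand_eq : ∀ s : ℝ,
      Real.exp (2 * muinf * s) * (pv ᵥ* ((Lam - ϱ s • Mm) * D * (Lam - ϱ s • Mm)) ⬝ᵥ (fun _ => (1 : ℝ)))
      = c0 * Real.exp (2 * muinf * s) + c1 * Real.exp (muinf * s) + c2 := by
    intro s
    rw [key (ϱ s), hϱ s]
    have hx : Real.exp (-muinf * s) = Real.exp (-(muinf * s)) := by ring_nf
    have h2 : Real.exp (2 * muinf * s) = Real.exp (muinf * s) * Real.exp (muinf * s) := by
      rw [← Real.exp_add]; ring_nf
    have h3 : Real.exp (muinf * s) * Real.exp (-(muinf * s)) = 1 := by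
      rw [← Real.exp_add]; simp
    have h3' : Real.exp (-(muinf * s)) = (Real.exp (muinf * s))⁻¹ := Real.exp_neg _
    rw [hx, h2, hc0, hc1, hc2, h3']
    have hne : Real.exp (muinf * s) ≠ 0 := Real.exp_ne_zero _
    field_simp
    ring
  -- explicit antiderivative
  set F : ℝ → ℝ := fun t => c0 / (2 * muinf) * Real.exp (2 * muinf * t)
      + c1 / muinf * Real.exp (muinf * t) + c2 * t with hF
  have hmu2 : (2 * muinf) ≠ 0 := by positivity
  have hmune : muinf ≠ 0 := ne_of_gt hmuinfpos
  have hderiv : ∀ s : ℝ, HasDerivAt F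
      (c0 * Real.exp (2 * muinf * s) + c1 * Real.exp (muinf * s) + c2) s := by
    intro s
    have h1 : HasDerivAt (fun t : ℝ => Real.exp (2 * muinf * t))
        (Real.exp (2 * muinf * s) * (2 * muinf)) s := by
      simpa [Function.comp_def] using (Real.hasDerivAt_exp (2 * muinf * s)).comp s
        ((hasDerivAt_id s).const_mul (2 * muinf))
    have h2 : HasDerivAt (fun t : ℝ => Real.exp (muinf * t))
        (Real.exp (muinf * s) * muinf) s := by
      simpa [Function.comp_def] using (Real.hasDerivAt_exp (muinf * s)).comp s
        ((hasDerivAt_id s).const_mul muinf)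
    have h3 : HasDerivAt (fun t : ℝ => c2 * t) c2 s := by
      simpa using (hasDerivAt_id s).const_mul c2
    have := ((h1.const_mul (c0 / (2 * muinf))).add (h2.const_mul (c1 / muinf))).add h3
    refine HasDerivAt.congr_deriv this ?_
    field_simp
  have hInt : ∀ t : ℝ,
      (∫ s in (0 : ℝ)..t, Real.exp (2 * muinf * s)
          * (pv ᵥ* ((Lam - ϱ s • Mm) * D * (Lam - ϱ s • Mm)) ⬝ᵥ (fun _ => (1 : ℝ))))
      = F t - F 0 := by
    intro t
    rw [intervalIntegral.integral_congr (g := fun s =>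
      c0 * Real.exp (2 * muinf * s) + c1 * Real.exp (muinf * s) + c2)
      (fun s _ => integrand_eq s)]
    exact intervalIntegral.integral_eq_sub_of_hasDerivAt (fun s _ => hderiv s)
      (Continuous.intervalIntegrable (by
        refine ((continuous_const.mul (Real.continuous_exp.comp
          (continuous_const.mul continuous_id))).add (continuous_const.mul
          (Real.continuous_exp.comp (continuous_const.mul continuous_id)))).add
          continuous_const) 0 t)
  -- explicit formula for σm2
  have hform : ∀ t : ℝ, σm2 t
      = c0 / muinf * (1 - Real.exp (-(2 * muinf * t)))
        + 2 * c1 / muinf * (Real.exp (-(muinf * t)) - Real.exp (-(2 * muinf * t)))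
        + 2 * c2 * (t * Real.exp (-(2 * muinf * t))) := by
    intro t
    rw [hσ t, hInt t, hF]
    simp only [mul_zero, Real.exp_zero]
    have hu : Real.exp (muinf * t) ≠ 0 := Real.exp_ne_zero _
    have p1 : Real.exp (-2 * muinf * t) = (Real.exp (muinf * t) ^ 2)⁻¹ := by
      rw [sq, ← Real.exp_add, ← Real.exp_neg]; ring_nf
    have p2 : Real.exp (2 * muinf * t) = Real.exp (muinf * t) ^ 2 := by
      rw [sq, ← Real.exp_add]; ring_nf
    have p3 : Real.exp (-(muinf * t)) = (Real.exp (muinf * t))⁻¹ := Real.exp_neg _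
    have p4 : Real.exp (-(2 * muinf * t)) = (Real.exp (muinf * t) ^ 2)⁻¹ := by
      rw [sq, ← Real.exp_add, ← Real.exp_neg]; ring_nf
    rw [p1, p2, p3, p4]
    field_simp
    ring
  -- limits of the individual pieces
  have lim2 : Tendsto (fun t : ℝ => Real.exp (-(2 * muinf * t))) atTop (nhds 0) :=
    exp_neg_tendsto (2 * muinf) (by positivity)
  have lim1 : Tendsto (fun t : ℝ => Real.exp (-(muinf * t))) atTop (nhds 0) :=
    exp_neg_tendsto muinf hmuinfpos
  have limte : Tendsto (fun t : ℝ => t * Real.exp (-(2 * muinf * t))) atTop (nhds 0) := by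
    have hc : (0 : ℝ) < 2 * muinf := by positivity
    have h0 : Tendsto (fun t : ℝ => 2 * muinf * t) atTop atTop :=
      Tendsto.const_mul_atTop hc tendsto_id
    have h := (tendsto_pow_mul_exp_neg_atTop_nhds_zero 1).comp h0
    have h2 := h.const_mul ((2 * muinf)⁻¹)
    have heq : (fun t : ℝ => t * Real.exp (-(2 * muinf * t)))
        = fun t : ℝ => (2 * muinf)⁻¹ * ((fun x : ℝ => x ^ 1 * Real.exp (-x)) ∘
            (fun t : ℝ => 2 * muinf * t)) t := by
      funext t
      simp only [Function.comp_apply, pow_one]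
      field_simp
    rw [heq]
    simpa using h2
  have final : Tendsto (fun t : ℝ =>
      c0 / muinf * (1 - Real.exp (-(2 * muinf * t)))
        + 2 * c1 / muinf * (Real.exp (-(muinf * t)) - Real.exp (-(2 * muinf * t)))
        + 2 * c2 * (t * Real.exp (-(2 * muinf * t)))) atTop (nhds (c0 / muinf)) := by
    have hone : Tendsto (fun _ : ℝ => (1 : ℝ)) atTop (nhds 1) := tendsto_const_nhds
    have h := ((((hone.sub lim2).const_mul (c0 / muinf)).add
      ((lim1.sub lim2).const_mul (2 * c1 / muinf))).add (limte.const_mul (2 * c2)))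
    simpa using h
  have hval : muinf⁻¹ * (pv ᵥ* ((Lam - ϱc • Mm) * D * (Lam - ϱc • Mm)) ⬝ᵥ (fun _ => (1 : ℝ)))
      = c0 / muinf := by
    rw [key ϱc, hc0, hc2]
    field_simp
  rw [hval]
  exact Tendsto.congr (fun t => (hform t).symm) final
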